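/- With e_K defined by the MILU recursion and τ_K := e_K / (e_K − Σ_{K₁∈s(K)} c_{K,K₁}) (assuming the denominator is positive), the identity τ_K = 1 + (Σ_{K₂∈s(K)} c_{K,K₂}) / (b_K + Σ_{K₁∈p(K)} c_{K,K₁}/τ_{K₁}) holds at every vertex K. -/

import Mathlib

open Finset

theorem lecn_identity (V : Type*) [Fintype V] [LinearOrder V]
    (c : V → V → ℝ) (b : V → ℝ) (e τ : V → ℝ)
    (hc_symm : ∀ K K', c K K' = c K' K)
    (hc_nonneg : ∀ K K', 0 ≤ c K K')
    (hb : ∀ K, 0 ≤ b K)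
    (he_pos : ∀ K, 0 < e K)
    (hrec : ∀ K, e K =
      b K + (∑ K₁ ∈ Finset.univ.filter (fun K₁ => K₁ ≠ K ∧ c K K₁ ≠ 0), c K K₁)
        - ∑ K₁ ∈ Finset.univ.filter (fun K₁ => K₁ < K ∧ c K K₁ ≠ 0),
            ∑ K₂ ∈ Finset.univ.filter (fun K₂ => K₁ < K₂ ∧ c K₁ K₂ ≠ 0),
              c K K₁ * c K₁ K₂ / e K₁)
    (hden : ∀ K, 0 < e K - ∑ K₁ ∈ Finset.univ.filter (fun K₁ => K < K₁ ∧ c K K₁ ≠ 0), c K K₁)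
    (hτ : ∀ K, τ K = e K /
      (e K - ∑ K₁ ∈ Finset.univ.filter (fun K₁ => K < K₁ ∧ c K K₁ ≠ 0), c K K₁))
    (hden' : ∀ K,
      b K + (∑ K₁ ∈ Finset.univ.filter (fun K₁ => K₁ < K ∧ c K K₁ ≠ 0), c K K₁ / τ K₁) ≠ 0) :
    ∀ K, τ K = 1 +
      (∑ K₂ ∈ Finset.univ.filter (fun K₂ => K < K₂ ∧ c K K₂ ≠ 0), c K K₂) /
      (b K + ∑ K₁ ∈ Finset.univ.filter (fun K₁ => K₁ < K ∧ c K K₁ ≠ 0), c K K₁ / τ K₁) := by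
  intro K
  set Ss := ∑ K₂ ∈ Finset.univ.filter (fun K₂ => K < K₂ ∧ c K K₂ ≠ 0), c K K₂ with hSs
  have hd := hden K
  have key : b K + ∑ K₁ ∈ Finset.univ.filter (fun K₁ => K₁ < K ∧ c K K₁ ≠ 0), c K K₁ / τ K₁
      = e K - Ss := by
    have h1 : ∀ K₁ ∈ Finset.univ.filter (fun K₁ => K₁ < K ∧ c K K₁ ≠ 0),
        c K K₁ / τ K₁ = c K K₁ -
          ∑ K₂ ∈ Finset.univ.filter (fun K₂ => K₁ < K₂ ∧ c K₁ K₂ ≠ 0),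
            c K K₁ * c K₁ K₂ / e K₁ := by
      intro K₁ _
      have he := (he_pos K₁).ne'
      have hdK₁ := (hden K₁).ne'
      rw [hτ K₁]
      rw [div_div_eq_mul_div]
      rw [show (∑ K₂ ∈ Finset.univ.filter (fun K₂ => K₁ < K₂ ∧ c K₁ K₂ ≠ 0),
            c K K₁ * c K₁ K₂ / e K₁)
          = c K K₁ * (∑ K₂ ∈ Finset.univ.filter (fun K₂ => K₁ < K₂ ∧ c K₁ K₂ ≠ 0),
              c K₁ K₂) / e K₁ by
        rw [Finset.mul_sum, Finset.sum_div]]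
      field_simp
    rw [Finset.sum_congr rfl h1, Finset.sum_sub_distrib]
    have hsplit : Finset.univ.filter (fun K₁ => K₁ ≠ K ∧ c K K₁ ≠ 0)
        = Finset.univ.filter (fun K₁ => K₁ < K ∧ c K K₁ ≠ 0)
          ∪ Finset.univ.filter (fun K₁ => K < K₁ ∧ c K K₁ ≠ 0) := by
      ext x
      simp only [Finset.mem_filter, Finset.mem_union, Finset.mem_univ, true_and,
        ne_eq]
      constructor
      · rintro ⟨h, hc⟩
        rcases lt_or_gt_of_ne h with h' | h'
        · exact Or.inl ⟨h', hc⟩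
        · exact Or.inr ⟨h', hc⟩
      · rintro (⟨h, hc⟩ | ⟨h, hc⟩)
        · exact ⟨ne_of_lt h, hc⟩
        · exact ⟨ne_of_gt h, hc⟩
    have hdisj : Disjoint (Finset.univ.filter (fun K₁ => K₁ < K ∧ c K K₁ ≠ 0))
        (Finset.univ.filter (fun K₁ => K < K₁ ∧ c K K₁ ≠ 0)) := by
      rw [Finset.disjoint_filter]
      rintro x _ ⟨h1, _⟩ ⟨h2, _⟩
      exact absurd h2 (not_lt.mpr h1.le)
    have hnsum : (∑ K₁ ∈ Finset.univ.filter (fun K₁ => K₁ ≠ K ∧ c K K₁ ≠ 0), c K K₁)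
        = (∑ K₁ ∈ Finset.univ.filter (fun K₁ => K₁ < K ∧ c K K₁ ≠ 0), c K K₁) + Ss := by
      rw [hsplit, Finset.sum_union hdisj]
    have hr := hrec K
    rw [hnsum] at hr
    linarith
  rw [key, hτ K, ← hSs]
  field_simp
  have hne : e K - Ss ≠ 0 := by rw [hSs]; exact hd.ne'
  rw [one_add_div hne, sub_add_cancel]
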